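/- Let $F$ be a finite group acting by automorphisms on a finite group $G$, and let $m, k, q$ be pairwise coprime natural numbers with $k$ also coprime to $|F|$ and $|G|$. Then $G_{mk,q}(g, y^k) = G_{m,q}(g,y)$ as subsets of $F$, and in particular $z_{mk,q}(g,y^k) = z_{m,q}(g,y)$. -/
import Mathlib


/-- For a group `F` acting by automorphisms on a group `G`, coprime `m, k` and `l` an
inverse of `k` modulo `m`, the set
`G_{m,k}(g,y) = {x ∈ F ∣ xᵐ = y and ∏_{j=0}^{m-1} x^{-⟨j/k⟩}.g = 1}`,
where `⟨j/k⟩ = (j·l) % m` and the product is taken in order `j = 0,…,m-1`. -/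
def GmkSet {F G : Type*} [Group F] [Group G] [MulDistribMulAction F G]
    (m l : ℕ) (g : G) (y : F) : Set F :=
  {x | x ^ m = y ∧
    ((List.range m).map fun j => (x⁻¹ ^ ((j * l) % m)) • g).prod = 1}

/-- If two products over `range m` are both `1` and the factors agree everywhere
except possibly at position `t`, then the factors at `t` agree as well. -/
lemma prod_range_eq_at_of_ne {M : Type*} [Group M] {f1 f2 : ℕ → M} {m t : ℕ} (ht : t < m)
    (h : ∀ j < m, j ≠ t → f1 j = f2 j)
    (h1 : ((List.range m).map f1).prod = 1)
    (h2 : ((List.range m).map f2).prod = 1) : f1 t = f2 t := by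
  obtain ⟨u, hu⟩ : ∃ u, m = (t + 1) + u := ⟨m - (t + 1), by omega⟩
  subst hu
  rw [List.range_add, List.range_succ] at h1 h2
  simp only [List.map_append, List.prod_append, List.map_singleton, List.prod_singleton,
    List.map_map] at h1 h2
  have hP : (List.range t).map f1 = (List.range t).map f2 := by
    refine List.map_congr_left fun j hj => ?_
    rw [List.mem_range] at hj
    exact h j (by omega) (by omega)
  have hS : (List.range u).map (f1 ∘ fun x => t + 1 + x)
      = (List.range u).map (f2 ∘ fun x => t + 1 + x) := by
    refine List.map_congr_left fun j hj => ?_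
    rw [List.mem_range] at hj
    exact h (t + 1 + j) (by omega) (by omega)
  rw [hP, hS] at h1
  have := h1.trans h2.symm
  -- `this : P * f1 t * S = P * f2 t * S`
  exact mul_left_cancel (mul_right_cancel this)

/-- Key lemma ("Lemma A"): if `r` is invertible mod `m` and the twisted product
`∏_{j<m} x^{-(jr mod m)} • g` equals `1`, then `x⁻¹ ^ m` fixes `g`. -/
lemma lemA {F G : Type*} [Group F] [Group G] [MulDistribMulAction F G]
    {m r s : ℕ} (hm : 0 < m) (hs : s * r % m = 1 % m) (x : F) (g : G)
    (hQ : ((List.range m).map fun j => (x⁻¹ ^ ((j * r) % m)) • g).prod = 1) :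
    x⁻¹ ^ m • g = g := by
  have hsr : s * r ≡ 1 [MOD m] := hs
  -- injectivity of j ↦ (j*r) % m on [0, m)
  have hinj : ∀ j1 < m, ∀ j2 < m, (j1 * r) % m = (j2 * r) % m → j1 = j2 := by
    intro j1 hj1 j2 hj2 hrr
    have hrs : r * s ≡ 1 [MOD m] := by rwa [mul_comm] at hsr
    have e1 : j1 ≡ j1 * (r * s) [MOD m] := by
      simpa using (Nat.ModEq.refl j1).mul hrs.symm
    have e2 : j1 * (r * s) ≡ j2 * (r * s) [MOD m] := by
      have h' : j1 * r ≡ j2 * r [MOD m] := hrr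
      simpa [mul_assoc] using h'.mul_right s
    have e3 : j2 * (r * s) ≡ j2 [MOD m] := by
      simpa using (Nat.ModEq.refl j2).mul hrs
    have h2 : j1 ≡ j2 [MOD m] := (e1.trans e2).trans e3
    have := h2
    unfold Nat.ModEq at this
    rwa [Nat.mod_eq_of_lt hj1, Nat.mod_eq_of_lt hj2] at this
  -- the special index t with (t*r) % m = m - 1
  set t : ℕ := ((m - 1) * s) % m with htdef
  have ht : t < m := Nat.mod_lt _ hm
  have hσt : (t * r) % m = m - 1 := by
    have h1 : (t * r) % m = ((m - 1) * (s * r)) % m := by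
      rw [htdef, Nat.mod_mul_mod, mul_assoc]
    have h2 : (m - 1) * (s * r) ≡ (m - 1) * 1 [MOD m] := (Nat.ModEq.refl (m - 1)).mul hsr
    rw [h1, h2, mul_one, Nat.mod_eq_of_lt (by omega)]
  -- product A : shift all exponents by 1 (act by x⁻¹)
  have hA : ((List.range m).map fun j => (x⁻¹ ^ ((j * r) % m + 1)) • g).prod = 1 := by
    have e1 : ((List.range m).map fun j => (x⁻¹ ^ ((j * r) % m + 1)) • g)
        = ((List.range m).map fun j => (x⁻¹ ^ ((j * r) % m)) • g).map (fun z => x⁻¹ • z) := by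
      rw [List.map_map]
      refine List.map_congr_left fun j _ => ?_
      simp [smul_smul, pow_succ']
    rw [e1, ← List.smul_prod', hQ, smul_one]
  -- product B : rotate the original product by s
  have hB : ((List.range m).map fun j => (x⁻¹ ^ (((j + s) * r) % m)) • g).prod = 1 := by
    have e2 : ((List.range m).map fun j => (x⁻¹ ^ (((j + s) * r) % m)) • g)
        = (((List.range m).map fun j => (x⁻¹ ^ ((j * r) % m)) • g).rotate s) := by
      refine List.ext_getElem (by simp) ?_
      intro i hi1 hi2
      rw [List.getElem_rotate]
      simp only [List.getElem_map, List.getElem_range, List.length_map, List.length_range]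
      congr 2
      rw [Nat.mod_mul_mod]
    rw [e2]
    exact List.prod_rotate_eq_one_of_prod_eq_one hQ s
  -- compare A and B at position t
  have key : (x⁻¹ ^ ((t * r) % m + 1)) • g = (x⁻¹ ^ (((t + s) * r) % m)) • g := by
    refine prod_range_eq_at_of_ne ht ?_ hA hB
    intro j hj hjt
    have hne : (j * r) % m ≠ m - 1 := fun hc => hjt (hinj j hj t ht (by rw [hc, hσt]))
    have hlt : (j * r) % m + 1 < m := by
      have := Nat.mod_lt (j * r) hm
      omega
    have hmod : ((j + s) * r) % m = ((j * r) % m + 1) % m := by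
      have : (j + s) * r ≡ j * r + 1 [MOD m] := by
        have : (j + s) * r = j * r + s * r := by ring
        rw [this]
        exact (Nat.ModEq.refl (j * r)).add hsr
      calc ((j + s) * r) % m = (j * r + 1) % m := this
        _ = ((j * r) % m + 1) % m := by
              rw [Nat.add_mod (j * r) 1 m, Nat.add_mod (j * r % m) 1 m,
                Nat.mod_mod_of_dvd _ dvd_rfl]
    rw [hmod, Nat.mod_eq_of_lt hlt]
  have hts : ((t + s) * r) % m = 0 := by
    have h1 : (t + s) * r ≡ (m - 1) + 1 [MOD m] := by
      have he : (t + s) * r = t * r + s * r := by ring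
      rw [he]
      have h2 : t * r ≡ m - 1 [MOD m] := by
        unfold Nat.ModEq
        rw [hσt, Nat.mod_eq_of_lt (by omega)]
      exact h2.add hsr
    have h3 : (m - 1) + 1 = m := by omega
    have h5 : ((t + s) * r) % m = ((m - 1) + 1) % m := h1
    rw [h3] at h5
    simpa using h5
  rw [hts] at key
  have h4 : (t * r) % m + 1 = m := by omega
  rw [h4] at key
  simpa using key

/-- If `x⁻¹ ^ m` fixes `g`, then `x⁻¹ ^ i • g` only depends on `i % m`. -/
lemma smul_pow_mod {F G : Type*} [Group F] [Group G] [MulDistribMulAction F G]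
    (x : F) (g : G) {m : ℕ} (hfix : x⁻¹ ^ m • g = g) (i : ℕ) :
    x⁻¹ ^ i • g = x⁻¹ ^ (i % m) • g := by
  have haux : ∀ n : ℕ, (x⁻¹ ^ m) ^ n • g = g := by
    intro n
    induction n with
    | zero => simp
    | succ n ih => rw [pow_succ, mul_smul, hfix, ih]
  conv_lhs => rw [← Nat.mod_add_div i m]
  rw [pow_add, mul_smul, pow_mul, haux]

/-- Splitting a product over `range (m*k)` of an `m`-periodic function into `k` blocks. -/
lemma prod_range_mul_eq_pow {M : Type*} [Monoid M] (f : ℕ → M) (m k : ℕ)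
    (hf : ∀ b i, f (m * b + i) = f i) :
    ((List.range (m * k)).map f).prod = (((List.range m).map f).prod) ^ k := by
  induction k with
  | zero => simp
  | succ n ih =>
    rw [Nat.mul_succ, List.range_add, List.map_append, List.prod_append, ih, List.map_map,
      pow_succ]
    congr 2
    exact List.map_congr_left fun j _ => hf n j

/-- If `w ^ k` fixes `g` and `k` is coprime to `|F|`, then `w` fixes `g`. -/
lemma fix_of_pow_fix {F G : Type*} [Group F] [Group G] [Fintype F] [MulDistribMulAction F G]
    {k : ℕ} (hkF : Nat.Coprime k (Fintype.card F)) (w : F) (g : G)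
    (h : w ^ k • g = g) : w • g = g := by
  set N := Fintype.card F with hN
  have h1 : w ^ k ∈ MulAction.stabilizer F g := h
  have h2 : w ^ N ∈ MulAction.stabilizer F g := by
    rw [hN, pow_card_eq_one]; exact Subgroup.one_mem _
  have hb := Nat.gcd_eq_gcd_ab k N
  rw [hkF] at hb
  have h1z : w ^ (k : ℤ) ∈ MulAction.stabilizer F g := by rw [zpow_natCast]; exact h1
  have h2z : w ^ (N : ℤ) ∈ MulAction.stabilizer F g := by rw [zpow_natCast]; exact h2
  have hw : w = (w ^ (k : ℤ)) ^ (Nat.gcdA k N) * (w ^ (N : ℤ)) ^ (Nat.gcdB k N) := by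
    rw [← zpow_mul, ← zpow_mul, ← zpow_add, ← hb]
    norm_num
  have : w ∈ MulAction.stabilizer F g := by
    rw [hw]
    exact Subgroup.mul_mem _ (Subgroup.zpow_mem _ h1z _) (Subgroup.zpow_mem _ h2z _)
  exact this

/-- The long product equals the `k`-th power of the short product, once `x⁻¹ ^ m` fixes `g`. -/
lemma prod_mk_eq {F G : Type*} [Group F] [Group G] [MulDistribMulAction F G]
    (x : F) (g : G) (m k r : ℕ) (hfm : x⁻¹ ^ m • g = g) :
    ((List.range (m * k)).map fun j => (x⁻¹ ^ ((j * r) % (m * k))) • g).prod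
      = (((List.range m).map fun j => (x⁻¹ ^ ((j * r) % m)) • g).prod) ^ k := by
  have hterm : ∀ j, (x⁻¹ ^ ((j * r) % (m * k))) • g = (x⁻¹ ^ ((j * r) % m)) • g := fun j => by
    rw [smul_pow_mod x g hfm ((j * r) % (m * k)),
      Nat.mod_mod_of_dvd _ (dvd_mul_right m k), ← smul_pow_mod x g hfm]
  rw [List.map_congr_left fun j _ => hterm j]
  refine prod_range_mul_eq_pow _ m k fun b i => ?_
  have he : (m * b + i) * r = i * r + m * (b * r) := by ring
  rw [he, Nat.add_mul_mod_self_left]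

/-- If `m`, `k`, `q` are pairwise coprime and `k` is moreover coprime to `|F|` and `|G|`,
then `G_{mk,q}(g, yᵏ) = G_{m,q}(g, y)`; in particular `z_{mk,q}(g,yᵏ) = z_{m,q}(g,y)`.
Here `r` is a common inverse of `q` modulo `mk` (hence also modulo `m`). -/
theorem GmkSet_mul_pow
    {F G : Type*} [Group F] [Group G] [Fintype F] [Fintype G]
    [MulDistribMulAction F G]
    (m k q r : ℕ) (hm : 0 < m) (hk : 0 < k) (hq : 0 < q)
    (hmk : Nat.Coprime m k) (hmq : Nat.Coprime m q) (hkq : Nat.Coprime k q)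
    (hkF : Nat.Coprime k (Fintype.card F)) (hkG : Nat.Coprime k (Fintype.card G))
    (hr : q * r ≡ 1 [MOD m * k])
    (g : G) (y : F) :
    GmkSet (F := F) (G := G) (m * k) r g (y ^ k) = GmkSet m r g y := by
  have hmk0 : 0 < m * k := Nat.mul_pos hm hk
  have hrm : q * r % m = 1 % m := hr.of_dvd (dvd_mul_right m k)
  ext x
  simp only [GmkSet, Set.mem_setOf_eq]
  constructor
  · rintro ⟨hxy, hP⟩
    have hfix : x⁻¹ ^ (m * k) • g = g := lemA hmk0 hr x g hP
    have hfm : x⁻¹ ^ m • g = g :=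
      fix_of_pow_fix hkF (x⁻¹ ^ m) g (by rw [← pow_mul]; exact hfix)
    constructor
    · have hpk : (x ^ m) ^ k = y ^ k := by rw [← pow_mul]; exact hxy
      have hbij : Function.Bijective (· ^ k : F → F) :=
        Nat.Coprime.pow_left_bijective (by rw [Nat.card_eq_fintype_card]; exact hkF.symm)
      exact hbij.injective hpk
    · have hQk :
          (((List.range m).map fun j => (x⁻¹ ^ ((j * r) % m)) • g).prod) ^ k = 1 := by
        rw [← prod_mk_eq x g m k r hfm]
        exact hP
      set Q := ((List.range m).map fun j => (x⁻¹ ^ ((j * r) % m)) • g).prod with hQdef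
      have h1 : orderOf Q ∣ k := orderOf_dvd_of_pow_eq_one hQk
      have h2 : orderOf Q ∣ Fintype.card G := orderOf_dvd_card
      have h3 : orderOf Q ∣ Nat.gcd k (Fintype.card G) := Nat.dvd_gcd h1 h2
      rw [hkG] at h3
      exact orderOf_eq_one_iff.mp (Nat.eq_one_of_dvd_one h3)
  · rintro ⟨hxy, hQ⟩
    have hfm : x⁻¹ ^ m • g = g := lemA hm hrm x g hQ
    refine ⟨by rw [pow_mul, hxy], ?_⟩
    rw [prod_mk_eq x g m k r hfm, hQ, one_pow]
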